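/- Let ε > 0, t ≥ 1 with εt a positive integer, and n = (3 + ε)t + 1. If each of at most n correct processes suggests at most ⌈3/ε⌉ digests, and each committed digest is suggested by at least εt + 1 correct processes, then the number of distinct committed digests is at most C = ⌈12/ε²⌉ + ⌈7/ε⌉. -/

import Mathlib

/-- Let `n = (3 + ε)t + 1 = 3t + e + 1` with `ε > 0`, `t ≥ 1` and
`e = εt` a positive integer. Each of the at most `n` correct processes
suggests at most `⌈3/ε⌉` digests, and each committed digest is suggested by at
least `εt + 1 = e + 1` correct processes; hence if `k` distinct digests are
committed, `k * (e + 1) ≤ (3t + e + 1) * ⌈3/ε⌉` forces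
`k ≤ C = ⌈12/ε²⌉ + ⌈7/ε⌉`. -/
theorem stmt_6 (ε : ℝ) (hε : 0 < ε) (t e k : ℕ) (ht : 1 ≤ t) (hepos : 1 ≤ e)
    (he : (e : ℝ) = ε * t)
    (h : k * (e + 1) ≤ (3 * t + e + 1) * ⌈(3 : ℝ) / ε⌉₊) :
    k ≤ ⌈(12 : ℝ) / ε ^ 2⌉₊ + ⌈(7 : ℝ) / ε⌉₊ := by
  by_contra hcon
  push_neg at hcon
  have hk1 : (⌈(12 : ℝ) / ε ^ 2⌉₊ : ℝ) + ⌈(7 : ℝ) / ε⌉₊ + 1 ≤ (k : ℝ) := by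
    exact_mod_cast Nat.succ_le_of_lt hcon
  have hc1 : (12 : ℝ) / ε ^ 2 ≤ ⌈(12 : ℝ) / ε ^ 2⌉₊ := Nat.le_ceil _
  have hc2 : (7 : ℝ) / ε ≤ ⌈(7 : ℝ) / ε⌉₊ := Nat.le_ceil _
  have hklarge : (12 : ℝ) / ε ^ 2 + 7 / ε + 1 ≤ (k : ℝ) := by linarith
  have ht' : (1 : ℝ) ≤ (t : ℝ) := by exact_mod_cast ht
  have hc : (⌈(3 : ℝ) / ε⌉₊ : ℝ) < 3 / ε + 1 :=
    Nat.ceil_lt_add_one (by positivity)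
  have hc0 : (0 : ℝ) ≤ (⌈(3 : ℝ) / ε⌉₊ : ℝ) := Nat.cast_nonneg _
  have hk : (k : ℝ) * ((e : ℝ) + 1) ≤ (3 * t + e + 1) * ⌈(3 : ℝ) / ε⌉₊ := by
    exact_mod_cast h
  rw [he] at hk
  -- replace the ceiling by a variable c
  set c : ℝ := (⌈(3 : ℝ) / ε⌉₊ : ℝ) with hcdef
  -- clear denominators: set a = 1/ε
  set a := 1 / ε with ha
  have ha0 : 0 < a := by positivity
  have haε : ε * a = 1 := by rw [ha]; field_simp
  have h3 : (3 : ℝ) / ε = 3 * a := by rw [ha]; ring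
  have h7 : (7 : ℝ) / ε = 7 * a := by rw [ha]; ring
  have h12 : (12 : ℝ) / ε ^ 2 = 12 * a ^ 2 := by
    rw [ha]; field_simp
  rw [h3] at hc
  rw [h7, h12] at hklarge
  have hat : a * (ε * t) = (t : ℝ) := by
    rw [show a * (ε * t) = (ε * a) * t by ring, haε, one_mul]
  have ha2t : a ^ 2 * (ε * t) = a * t := by
    rw [show a ^ 2 * (ε * t) = a * (a * (ε * t)) by ring, hat]
  have he1 : (0 : ℝ) < ε * t + 1 := by positivity
  have hn0 : (0 : ℝ) < 3 * t + ε * t + 1 := by positivity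
  have step1 : (3 * (t : ℝ) + ε * t + 1) * c < (3 * t + ε * t + 1) * (3 * a + 1) :=
    mul_lt_mul_of_pos_left hc hn0
  have step2 : (12 * a ^ 2 + 7 * a + 1) * (ε * t + 1) ≤ (k : ℝ) * (ε * t + 1) :=
    mul_le_mul_of_nonneg_right hklarge he1.le
  nlinarith [mul_le_mul_of_nonneg_right ht' ha0.le, mul_pos ha0 ha0]
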